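/- If G = (S, 𝓕) is a local forest greedoid with rank function r, then the linear system { x(U) ≥ r(S) − r(S \ U) for all U ⊆ S } is totally dual integral: for every integer weight vector c ∈ ℤ^S for which min{ Σ_{s∈S} c(s)x(s) : x satisfies the system } is finite, the dual program max{ Σ_{U⊆S} y(U)(r(S) − r(S \ U)) : Σ{y(U) : s ∈ U} = c(s) for all s ∈ S, y ≥ 0 } has an integer optimal solution. -/

import Mathlib

open Finset

set_option linter.unusedSectionVars false
set_option linter.unusedVariables false

variable {α : Type*} [DecidableEq α] [Fintype α]

/-- `X` is subfeasible: contained in some feasible set. -/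
def Subfeasible (F : Set (Finset α)) (X : Finset α) : Prop :=
  ∃ Y ∈ F, X ⊆ Y

/-- Greedoid axioms: `∅` is feasible, and the exchange property. -/
def IsGreedoid (F : Set (Finset α)) : Prop :=
  (∅ : Finset α) ∈ F ∧
    ∀ X ∈ F, ∀ Y ∈ F, X.card < Y.card → ∃ y ∈ Y, y ∉ X ∧ insert y X ∈ F

/-- Local union property. -/
def LocalUnion (F : Set (Finset α)) : Prop :=
  ∀ A ∈ F, ∀ B ∈ F, Subfeasible F (A ∪ B) → A ∪ B ∈ F

/-- Local intersection property. -/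
def LocalInter (F : Set (Finset α)) : Prop :=
  ∀ A ∈ F, ∀ B ∈ F, Subfeasible F (A ∪ B) → A ∩ B ∈ F

/-- Local forest property. -/
def LocalForest (F : Set (Finset α)) : Prop :=
  ∀ A ∈ F, ∀ x y z : α,
    insert x A ∈ F → insert y A ∈ F → insert x (insert y A) ∈ F →
      insert z (insert x (insert y A)) ∈ F →
      insert z (insert x A) ∈ F ∨ insert z (insert y A) ∈ F

/-- The rank function of a greedoid: max cardinality of a feasible subset. -/
noncomputable def grank (F : Set (Finset α)) (A : Finset α) : ℕ :=
  sSup {n : ℕ | ∃ X ∈ F, X ⊆ A ∧ X.card = n}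

/-- A base: a feasible set of maximum size. -/
def IsBase (F : Set (Finset α)) (B : Finset α) : Prop :=
  B ∈ F ∧ ∀ C ∈ F, C.card ≤ B.card

/-- The set of continuations of a feasible set `A`. -/
def Gamma (F : Set (Finset α)) (A : Finset α) : Set α :=
  {x | x ∉ A ∧ insert x A ∈ F}

/-- `P` is the `x`-path in `A`: the unique inclusion-minimal feasible subset
of `A` containing `x`. -/
def IsPathIn (F : Set (Finset α)) (A : Finset α) (x : α) (P : Finset α) : Prop :=
  P ∈ F ∧ P ⊆ A ∧ x ∈ P ∧ ∀ Q ∈ F, Q ⊆ A → x ∈ Q → P ⊆ Q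

/-- `P` is a path. -/
def IsPath (F : Set (Finset α)) (P : Finset α) : Prop :=
  ∃ A ∈ F, ∃ x ∈ A, IsPathIn F A x P

/-- `l` is a feasible ordering (of the set of its elements): every prefix is feasible. -/
def FeasibleOrdering (F : Set (Finset α)) (l : List α) : Prop :=
  l.Nodup ∧ ∀ i : ℕ, (l.take i).toFinset ∈ F

/-- `B` is a greedy base for maximizing `w`. -/
def GreedyMaxBase (F : Set (Finset α)) (w : Finset α → ℝ) (B : Finset α) : Prop :=
  IsBase F B ∧ ∃ l : List α, FeasibleOrdering F l ∧ l.toFinset = B ∧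
    ∀ (i : ℕ) (hi : i < l.length), ∀ y ∈ Gamma F (l.take i).toFinset,
      w (insert y (l.take i).toFinset) ≤ w (insert (l.get ⟨i, hi⟩) (l.take i).toFinset)

/-- `B` is a greedy base for minimizing `w`. -/
def GreedyMinBase (F : Set (Finset α)) (w : Finset α → ℝ) (B : Finset α) : Prop :=
  IsBase F B ∧ ∃ l : List α, FeasibleOrdering F l ∧ l.toFinset = B ∧
    ∀ (i : ℕ) (hi : i < l.length), ∀ y ∈ Gamma F (l.take i).toFinset,
      w (insert (l.get ⟨i, hi⟩) (l.take i).toFinset) ≤ w (insert y (l.take i).toFinset)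

/-- The shadow vector of a feasible set `B`: `sh_B(x) = |B| - r(B \ {x})`. -/
noncomputable def shVec (F : Set (Finset α)) (B : Finset α) : α → ℝ :=
  fun x => (B.card : ℝ) - (grank F (B.erase x) : ℝ)

section Aux

variable {F : Set (Finset α)}

lemma grank_bdd (A : Finset α) : BddAbove {n : ℕ | ∃ X ∈ F, X ⊆ A ∧ X.card = n} :=
  ⟨Fintype.card α, by rintro n ⟨X, hX, hXA, rfl⟩; exact X.card_le_univ⟩

lemma le_grank {X A : Finset α} (hX : X ∈ F) (hXA : X ⊆ A) : X.card ≤ grank F A :=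
  le_csSup (grank_bdd A) ⟨X, hX, hXA, rfl⟩

lemma grank_spec (hE : (∅ : Finset α) ∈ F) (A : Finset α) :
    ∃ X ∈ F, X ⊆ A ∧ X.card = grank F A := by
  have hne : {n : ℕ | ∃ X ∈ F, X ⊆ A ∧ X.card = n}.Nonempty := ⟨0, ∅, hE, by simp⟩
  exact Nat.sSup_mem hne (grank_bdd A)

lemma grank_mono (hE : (∅ : Finset α) ∈ F) {A B : Finset α} (h : A ⊆ B) :
    grank F A ≤ grank F B := by
  obtain ⟨X, hX, hXA, hcard⟩ := grank_spec hE A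
  rw [← hcard]
  exact le_grank hX (hXA.trans h)

lemma grank_feasible (hE : (∅ : Finset α) ∈ F) {A : Finset α} (hA : A ∈ F) :
    grank F A = A.card := by
  refine le_antisymm ?_ (le_grank hA Subset.rfl)
  obtain ⟨X, hX, hXA, hcard⟩ := grank_spec hE A
  rw [← hcard]
  exact Finset.card_le_card hXA

/-- Exchange chain: any feasible `X ⊆ Y` extends inside `Y` to any cardinality `k ≤ |Y|`. -/
lemma ext_chain (hG : IsGreedoid F) :
    ∀ n : ℕ, ∀ k : ℕ, ∀ X ∈ F, ∀ Y ∈ F, X ⊆ Y → k - X.card = n → X.card ≤ k → k ≤ Y.card →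
      ∃ Z ∈ F, X ⊆ Z ∧ Z ⊆ Y ∧ Z.card = k := by
  intro n
  induction n with
  | zero =>
    intro k X hX Y hY hXY hn hk1 hk2
    exact ⟨X, hX, Subset.rfl, hXY, by omega⟩
  | succ n ih =>
    intro k X hX Y hY hXY hn hk1 hk2
    have hlt : X.card < Y.card := by omega
    obtain ⟨y, hyY, hyX, hins⟩ := hG.2 X hX Y hY hlt
    have hsub : insert y X ⊆ Y := insert_subset hyY hXY
    have hcard : (insert y X).card = X.card + 1 := card_insert_of_notMem hyX
    obtain ⟨Z, hZ, hXZ, hZY, hZk⟩ := ih k (insert y X) hins Y hY hsub (by omega) (by omega) hk2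
    exact ⟨Z, hZ, (subset_insert y X).trans hXZ, hZY, hZk⟩

lemma ext_chain' (hG : IsGreedoid F) {X Y : Finset α} (hX : X ∈ F) (hY : Y ∈ F)
    (hXY : X ⊆ Y) {k : ℕ} (hk1 : X.card ≤ k) (hk2 : k ≤ Y.card) :
    ∃ Z ∈ F, X ⊆ Z ∧ Z ⊆ Y ∧ Z.card = k :=
  ext_chain hG (k - X.card) k X hX Y hY hXY rfl hk1 hk2

open Classical in
noncomputable def pathF (F : Set (Finset α)) (A : Finset α) (x : α) : Finset α :=
  if h : ∃ P, IsPathIn F A x P then h.choose else ∅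

lemma path_isPathIn (hI : LocalInter F) {A : Finset α} (hA : A ∈ F) {x : α} (hx : x ∈ A) :
    IsPathIn F A x (pathF F A x) := by
  have hex : ∃ P, IsPathIn F A x P := by
    classical
    have hne : (A.powerset.filter (fun Q => Q ∈ F ∧ x ∈ Q)).Nonempty :=
      ⟨A, by simp [hA, hx]⟩
    obtain ⟨P, hPmem, hPmin⟩ := Finset.exists_min_image _ Finset.card hne
    simp only [mem_filter, mem_powerset] at hPmem
    obtain ⟨hPA, hPF, hxP⟩ := hPmem
    refine ⟨P, hPF, hPA, hxP, ?_⟩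
    intro Q hQ hQA hxQ
    have hsf : Subfeasible F (P ∪ Q) := ⟨A, hA, union_subset hPA hQA⟩
    have hint : P ∩ Q ∈ F := hI P hPF Q hQ hsf
    have hmem : P ∩ Q ∈ A.powerset.filter (fun Q => Q ∈ F ∧ x ∈ Q) := by
      simp only [mem_filter, mem_powerset]
      exact ⟨(inter_subset_left).trans hPA, hint, mem_inter.2 ⟨hxP, hxQ⟩⟩
    have := hPmin _ hmem
    have heq : P ∩ Q = P :=
      Finset.eq_of_subset_of_card_le inter_subset_left (by omega)
    calc P = P ∩ Q := heq.symm
    _ ⊆ Q := inter_subset_right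
  rw [pathF, dif_pos hex]
  exact hex.choose_spec

lemma path_unique {A : Finset α} {x : α} {P Q : Finset α}
    (h1 : IsPathIn F A x P) (h2 : IsPathIn F A x Q) : P = Q :=
  subset_antisymm (h1.2.2.2 Q h2.1 h2.2.1 h2.2.2.1) (h2.2.2.2 P h1.1 h1.2.1 h1.2.2.1)

lemma path_mem_F (hI : LocalInter F) {A : Finset α} (hA : A ∈ F) {x : α} (hx : x ∈ A) :
    pathF F A x ∈ F := (path_isPathIn hI hA hx).1

lemma path_subset (hI : LocalInter F) {A : Finset α} (hA : A ∈ F) {x : α} (hx : x ∈ A) :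
    pathF F A x ⊆ A := (path_isPathIn hI hA hx).2.1

lemma mem_path_self (hI : LocalInter F) {A : Finset α} (hA : A ∈ F) {x : α} (hx : x ∈ A) :
    x ∈ pathF F A x := (path_isPathIn hI hA hx).2.2.1

lemma path_min (hI : LocalInter F) {A : Finset α} (hA : A ∈ F) {x : α} (hx : x ∈ A)
    {Q : Finset α} (hQ : Q ∈ F) (hQA : Q ⊆ A) (hxQ : x ∈ Q) : pathF F A x ⊆ Q :=
  (path_isPathIn hI hA hx).2.2.2 Q hQ hQA hxQ

lemma path_stable (hI : LocalInter F) {A B : Finset α} (hA : A ∈ F) (hB : B ∈ F)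
    (hAB : A ⊆ B) {x : α} (hx : x ∈ A) : pathF F B x = pathF F A x := by
  have hxB : x ∈ B := hAB hx
  have h1 := path_isPathIn hI hB hxB
  have hPA : pathF F B x ⊆ A := h1.2.2.2 A hA hAB hx
  have h2 : IsPathIn F A x (pathF F B x) :=
    ⟨h1.1, hPA, h1.2.2.1, fun Q hQ hQA hxQ => h1.2.2.2 Q hQ (hQA.trans hAB) hxQ⟩
  exact path_unique h2 (path_isPathIn hI hA hx)


lemma biUnion_paths_mem (hU : LocalUnion F) (hI : LocalInter F) (hE : (∅ : Finset α) ∈ F)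
    {A : Finset α} (hA : A ∈ F) (s : Finset α) :
    s ⊆ A → s.biUnion (fun z => pathF F A z) ∈ F := by
  classical
  induction s using Finset.induction_on with
  | empty => intro _; simpa using hE
  | @insert a s ha ih =>
    intro hins
    have hsA : s ⊆ A := (Finset.subset_insert a s).trans hins
    have haA : a ∈ A := hins (mem_insert_self a s)
    rw [Finset.biUnion_insert]
    refine hU _ (path_mem_F hI hA haA) _ (ih hsA) ⟨A, hA, ?_⟩
    refine union_subset (path_subset hI hA haA) ?_
    intro u hu
    obtain ⟨z, hz, hz2⟩ := Finset.mem_biUnion.1 hu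
    exact path_subset hI hA (hsA hz) hz2

lemma rank_sdiff (hG : IsGreedoid F) (hU : LocalUnion F) (hI : LocalInter F)
    {A : Finset α} (hA : A ∈ F) (U : Finset α) :
    grank F (A \ U) = (A.filter (fun z => Disjoint (pathF F A z) U)).card := by
  classical
  set s := A.filter (fun z => Disjoint (pathF F A z) U) with hsdef
  have hsA : s ⊆ A := filter_subset _ _
  apply le_antisymm
  · obtain ⟨X, hX, hXsub, hcard⟩ := grank_spec hG.1 (A \ U)
    rw [← hcard]
    have hXA : X ⊆ A := hXsub.trans (sdiff_subset)
    have : X ⊆ s := by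
      intro z hz
      rw [hsdef, mem_filter]
      refine ⟨hXA hz, ?_⟩
      have hpz : pathF F A z ⊆ X := path_min hI hA (hXA hz) hX hXA hz
      rw [Finset.disjoint_left]
      intro u hu
      have h1 := hpz hu
      have h2 := hXsub h1
      exact (Finset.mem_sdiff.1 h2).2
    exact Finset.card_le_card this
  · set W := s.biUnion (fun z => pathF F A z) with hWdef
    have hW : W ∈ F := biUnion_paths_mem hU hI hG.1 hA s hsA
    have hWsub : W ⊆ A \ U := by
      intro u hu
      obtain ⟨z, hz, hz2⟩ := Finset.mem_biUnion.1 hu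
      have hzA : z ∈ A := hsA hz
      refine Finset.mem_sdiff.2 ⟨path_subset hI hA hzA hz2, ?_⟩
      have hdisj := (mem_filter.1 hz).2
      exact Finset.disjoint_left.1 hdisj hz2
    have hsW : s ⊆ W := by
      intro z hz
      exact Finset.mem_biUnion.2 ⟨z, hz, mem_path_self hI hA (hsA hz)⟩
    calc s.card ≤ W.card := Finset.card_le_card hsW
    _ ≤ grank F (A \ U) := le_grank hW hWsub

/-- From a feasible `Z ⊆ R` with `|Z| = |R| - 1` extract the missing element. -/
lemma missing_elt {R Z : Finset α} (hZR : Z ⊆ R) (hc : Z.card = R.card - 1)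
    (hR : 1 ≤ R.card) : ∃ m ∈ R, Z = R.erase m := by
  classical
  have hcard2 : (R \ Z).card = 1 := by rw [Finset.card_sdiff_of_subset hZR]; omega
  obtain ⟨m, hmeq⟩ := Finset.card_eq_one.1 hcard2
  have hmR : m ∈ R := by
    have : m ∈ R \ Z := hmeq ▸ mem_singleton_self m
    exact (Finset.mem_sdiff.1 this).1
  refine ⟨m, hmR, ?_⟩
  apply Finset.eq_of_subset_of_card_le
  · intro u hu
    refine Finset.mem_erase.2 ⟨?_, hZR hu⟩
    rintro rfl
    have : u ∈ R \ Z := hmeq ▸ mem_singleton_self u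
    exact (Finset.mem_sdiff.1 this).2 hu
  · rw [Finset.card_erase_of_mem hmR]; omega

/-- Predecessor structure of paths: the path of a new element `q` over feasible `A` is
either `{q}` or `q` added to the path of some `w ∈ A`. -/
lemma path_pred (hG : IsGreedoid F) (hU : LocalUnion F) (hI : LocalInter F)
    (hLF : LocalForest F) {A : Finset α} (hA : A ∈ F) {q : α} (hq : q ∉ A)
    (hqA : insert q A ∈ F) :
    pathF F (insert q A) q = {q} ∨
      ∃ w ∈ A, pathF F (insert q A) q = insert q (pathF F A w) ∧ q ∉ pathF F A w := by
  classical
  set P := pathF F (insert q A) q with hPdef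
  have hpath := path_isPathIn hI hqA (mem_insert_self q A)
  have hPF : P ∈ F := hpath.1
  have hPsub : P ⊆ insert q A := hpath.2.1
  have hqP : q ∈ P := hpath.2.2.1
  have hPmin : ∀ Q ∈ F, Q ⊆ insert q A → q ∈ Q → P ⊆ Q := hpath.2.2.2
  have hP'sub : P.erase q ⊆ A := by
    intro u hu
    have h1 := Finset.mem_erase.1 hu
    have h2 := hPsub h1.2
    rcases Finset.mem_insert.1 h2 with h | h
    · exact absurd h h1.1
    · exact h
  have hPcard : 1 ≤ P.card := Finset.card_pos.2 ⟨q, hqP⟩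
  -- P minus q is feasible
  have hP' : P.erase q ∈ F := by
    obtain ⟨Z, hZF, _, hZsub2, hZcard⟩ :=
      ext_chain' hG hG.1 hPF (empty_subset P) (by simp) (by omega : P.card - 1 ≤ P.card)
    obtain ⟨m, hmR, hZm⟩ := missing_elt hZsub2 hZcard hPcard
    by_cases hmq : m = q
    · rw [hZm, hmq] at hZF; exact hZF
    · exfalso
      have hqZ : q ∈ Z := by
        rw [hZm]; exact Finset.mem_erase.2 ⟨fun h => hmq h.symm, hqP⟩
      have hsub := hPmin Z hZF (hZm ▸ (erase_subset m P).trans hPsub) hqZ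
      have := Finset.card_le_card hsub
      rw [hZm, Finset.card_erase_of_mem hmR] at this
      omega
  by_cases hP'e : P.erase q = ∅
  · left
    apply subset_antisymm
    · intro u hu
      by_cases huq : u = q
      · simp [huq]
      · exfalso
        have : u ∈ P.erase q := Finset.mem_erase.2 ⟨huq, hu⟩
        rw [hP'e] at this; simp at this
    · simp [hqP]
  · right
    set P' := P.erase q with hP'def
    have hPins : P = insert q P' := by
      rw [hP'def, Finset.insert_erase hqP]
    have hqP' : q ∉ P' := Finset.notMem_erase q P
    have hCful : ∀ x ∈ P', ∀ y ∈ P', P'.erase x ∈ F → P'.erase y ∈ F → x = y := by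
      intro x hx y hy hfx hfy
      by_contra hxy
      have hunion : P'.erase x ∪ P'.erase y = P' := by
        ext u
        simp only [Finset.mem_union, Finset.mem_erase]
        constructor
        · rintro (⟨_, h⟩ | ⟨_, h⟩) <;> exact h
        · intro hu
          rcases eq_or_ne u x with rfl | hux
          · exact Or.inr ⟨fun h => hxy h, hu⟩
          · exact Or.inl ⟨hux, hu⟩
      have hsf : Subfeasible F (P'.erase x ∪ P'.erase y) := by
        rw [hunion]; exact ⟨A, hA, hP'sub⟩
      have hint : P'.erase x ∩ P'.erase y ∈ F := hI _ hfx _ hfy hsf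
      set A0 := P'.erase x ∩ P'.erase y with hA0def
      have hA0x : insert x A0 = P'.erase y := by
        ext u
        simp only [Finset.mem_insert, hA0def, Finset.mem_inter, Finset.mem_erase]
        constructor
        · rintro (rfl | ⟨h1, h2⟩)
          · exact ⟨fun h => hxy h, hx⟩
          · exact h2
        · rintro ⟨huy, hu⟩
          rcases eq_or_ne u x with rfl | hux
          · exact Or.inl rfl
          · exact Or.inr ⟨⟨hux, hu⟩, huy, hu⟩
      have hA0y : insert y A0 = P'.erase x := by
        ext u
        simp only [Finset.mem_insert, hA0def, Finset.mem_inter, Finset.mem_erase]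
        constructor
        · rintro (rfl | ⟨h1, h2⟩)
          · exact ⟨fun h => hxy h.symm, hy⟩
          · exact h1
        · rintro ⟨hux, hu⟩
          rcases eq_or_ne u y with rfl | huy
          · exact Or.inl rfl
          · exact Or.inr ⟨⟨hux, hu⟩, huy, hu⟩
      have hxy' : insert x (insert y A0) = P' := by
        rw [hA0y, Finset.insert_erase hx]
      have hLF1 : insert x A0 ∈ F := by rw [hA0x]; exact hfy
      have hLF2 : insert y A0 ∈ F := by rw [hA0y]; exact hfx
      have hLF3 : insert x (insert y A0) ∈ F := by rw [hxy']; exact hP'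
      have hLF4 : insert q (insert x (insert y A0)) ∈ F := by
        rw [hxy', ← hPins]; exact hPF
      rcases hLF A0 hint x y q hLF1 hLF2 hLF3 hLF4 with h | h
      · rw [hA0x] at h
        have hsubA : insert q (P'.erase y) ⊆ insert q A :=
          insert_subset_insert _ ((erase_subset _ _).trans hP'sub)
        have hPsubR := hPmin _ h hsubA (mem_insert_self _ _)
        have hyP : y ∈ P := hPins ▸ Finset.mem_insert_of_mem hy
        have hyR := hPsubR hyP
        rcases Finset.mem_insert.1 hyR with h' | h'
        · exact hq (h' ▸ hP'sub hy)
        · exact (Finset.mem_erase.1 h').1 rfl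
      · rw [hA0y] at h
        have hsubA : insert q (P'.erase x) ⊆ insert q A :=
          insert_subset_insert _ ((erase_subset _ _).trans hP'sub)
        have hPsubR := hPmin _ h hsubA (mem_insert_self _ _)
        have hxP : x ∈ P := hPins ▸ Finset.mem_insert_of_mem hx
        have hxR := hPsubR hxP
        rcases Finset.mem_insert.1 hxR with h' | h'
        · exact hq (h' ▸ hP'sub hx)
        · exact (Finset.mem_erase.1 h').1 rfl
    have hP'card : 1 ≤ P'.card := Finset.card_pos.2 (Finset.nonempty_of_ne_empty hP'e)
    obtain ⟨Z, hZF, _, hZsub2, hZcard⟩ :=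
      ext_chain' hG hG.1 hP' (empty_subset P') (by simp) (by omega : P'.card - 1 ≤ P'.card)
    obtain ⟨w, hwP', hZw⟩ := missing_elt hZsub2 hZcard hP'card
    have hfw : P'.erase w ∈ F := hZw ▸ hZF
    have hwA : w ∈ A := hP'sub hwP'
    have hP'path : IsPathIn F A w P' := by
      refine ⟨hP', hP'sub, hwP', ?_⟩
      intro Q hQ hQA hwQ
      by_contra hnsub
      have hsf : Subfeasible F (P' ∪ Q) := ⟨A, hA, union_subset hP'sub hQA⟩
      have hint : P' ∩ Q ∈ F := hI _ hP' _ hQ hsf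
      have hproper : P' ∩ Q ⊂ P' := by
        refine Finset.ssubset_iff_subset_ne.2 ⟨inter_subset_left, ?_⟩
        intro h
        exact hnsub (by rw [← h]; exact inter_subset_right)
      have hcardlt : (P' ∩ Q).card < P'.card := Finset.card_lt_card hproper
      obtain ⟨Z', hZ'F, hZ'sub1, hZ'sub2, hZ'card⟩ :=
        ext_chain' hG hint hP' inter_subset_left (by omega) (by omega : P'.card - 1 ≤ P'.card)
      obtain ⟨m', hm'P, hZ'm⟩ := missing_elt hZ'sub2 hZ'card hP'card
      have hm'w : m' = w := hCful m' hm'P w hwP' (hZ'm ▸ hZ'F) hfw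
      subst hm'w
      have hwZ' : m' ∈ Z' := hZ'sub1 (mem_inter.2 ⟨hwP', hwQ⟩)
      rw [hZ'm] at hwZ'
      exact (Finset.mem_erase.1 hwZ').1 rfl
    have hPeq : pathF F A w = P' :=
      (path_unique (path_isPathIn hI hA hwA) hP'path).symm ▸ rfl
    exact ⟨w, hwA, by rw [hPeq, ← hPins], by rw [hPeq]; exact hqP'⟩

end Aux

/-- Greedy extension: a list of greedily chosen (minimum new path weight)
elements extending a feasible set until no extension is possible. -/
inductive GExt (F : Set (Finset α)) (w : α → ℕ) : Finset α → List α → Prop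
  | nil (A : Finset α) : (∀ q, q ∉ A → insert q A ∉ F) → GExt F w A []
  | cons (A : Finset α) (q : α) (L : List α) :
      q ∉ A → insert q A ∈ F →
      (∀ q', q' ∉ A → insert q' A ∈ F →
        (∑ s ∈ pathF F (insert q A) q, w s) ≤ ∑ s ∈ pathF F (insert q' A) q', w s) →
      GExt F w (insert q A) L → GExt F w A (q :: L)

section Aux2

variable {F : Set (Finset α)} {w : α → ℕ}

lemma union_toFinset_cons (A : Finset α) (q : α) (L : List α) :
    A ∪ (q :: L).toFinset = insert q A ∪ L.toFinset := by
  ext u; simp only [List.toFinset_cons, mem_union, mem_insert]; tauto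

lemma gext_exists (w : α → ℕ) :
    ∀ n (A : Finset α), (univ \ A).card ≤ n → ∃ l, GExt F w A l := by
  intro n
  induction n with
  | zero =>
    intro A hA
    refine ⟨[], GExt.nil A ?_⟩
    intro q hq
    exfalso
    have : q ∈ univ \ A := Finset.mem_sdiff.2 ⟨mem_univ q, hq⟩
    have := Finset.card_pos.2 ⟨q, this⟩
    omega
  | succ n ih =>
    intro A hA
    classical
    by_cases h : (univ.filter (fun q => q ∉ A ∧ insert q A ∈ F)).Nonempty
    · obtain ⟨q, hqmem, hqmin⟩ :=
        Finset.exists_min_image _ (fun q => ∑ s ∈ pathF F (insert q A) q, w s) h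
      simp only [mem_filter, mem_univ, true_and] at hqmem
      have hcard : (univ \ insert q A).card < (univ \ A).card := by
        apply Finset.card_lt_card
        refine Finset.ssubset_iff_of_subset (Finset.sdiff_subset_sdiff Subset.rfl
          (Finset.subset_insert q A)) |>.2 ?_
        exact ⟨q, Finset.mem_sdiff.2 ⟨mem_univ q, hqmem.1⟩, by simp⟩
      obtain ⟨l, hl⟩ := ih (insert q A) (by omega)
      refine ⟨q :: l, GExt.cons A q l hqmem.1 hqmem.2 ?_ hl⟩
      intro q' h1 h2
      exact hqmin q' (by simp [h1, h2])
    · refine ⟨[], GExt.nil A ?_⟩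
      intro q hq hins
      exact h ⟨q, by simp [hq, hins]⟩

lemma gext_union_mem (h : GExt F w A l) : A ∈ F → A ∪ l.toFinset ∈ F := by
  induction h with
  | nil A h => intro hA; simpa using hA
  | cons A q L hq hins hmin hL ih =>
    intro hA
    rw [union_toFinset_cons]
    exact ih hins

lemma gext_maximal (h : GExt F w A l) :
    ∀ x, x ∉ A ∪ l.toFinset → insert x (A ∪ l.toFinset) ∉ F := by
  induction h with
  | nil A h => intro x hx; simp only [List.toFinset_nil, union_empty] at hx ⊢; exact h x hx
  | cons A q L hq hins hmin hL ih =>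
    intro x hx
    rw [union_toFinset_cons] at hx ⊢
    exact ih x hx

lemma gext_append {l₁ : List α} :
    ∀ {A : Finset α} {l₂ : List α}, GExt F w A (l₁ ++ l₂) →
      GExt F w (A ∪ l₁.toFinset) l₂ := by
  induction l₁ with
  | nil => intro A l₂ h; simpa using h
  | cons a l₁ ih =>
    intro A l₂ h
    rw [union_toFinset_cons]
    cases h with
    | cons _ _ _ hq hins hmin hL => exact ih hL

lemma gext_prefix_mem {l₁ : List α} :
    ∀ {A : Finset α} {l₂ : List α}, A ∈ F → GExt F w A (l₁ ++ l₂) →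
      A ∪ l₁.toFinset ∈ F := by
  induction l₁ with
  | nil => intro A l₂ hA h; simpa using hA
  | cons a l₁ ih =>
    intro A l₂ hA h
    rw [union_toFinset_cons]
    cases h with
    | cons _ _ _ hq hins hmin hL => exact ih hins hL

/-- Monotonicity of greedy path weights: consecutive picks have nondecreasing
final path weight. -/
lemma mono_step (hG : IsGreedoid F) (hU : LocalUnion F) (hI : LocalInter F)
    (hLF : LocalForest F) {A : Finset α} (hA : A ∈ F) {q b : α}
    (hq : q ∉ A) (hqF : insert q A ∈ F)
    (hmin : ∀ q', q' ∉ A → insert q' A ∈ F →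
      (∑ s ∈ pathF F (insert q A) q, w s) ≤ ∑ s ∈ pathF F (insert q' A) q', w s)
    (hb : b ∉ insert q A) (hbF : insert b (insert q A) ∈ F)
    {B : Finset α} (hB : B ∈ F) (hsub : insert b (insert q A) ⊆ B) :
    (∑ s ∈ pathF F B q, w s) ≤ ∑ s ∈ pathF F B b, w s := by
  classical
  have hqB : insert q A ⊆ B := (Finset.subset_insert _ _).trans hsub
  have h1 : pathF F B q = pathF F (insert q A) q :=
    path_stable hI hqF hB hqB (mem_insert_self q A)
  have h2 : pathF F B b = pathF F (insert b (insert q A)) b :=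
    path_stable hI hbF hB hsub (mem_insert_self _ _)
  have hbnA : b ∉ A := fun h => hb (mem_insert_of_mem h)
  rcases path_pred hG hU hI hLF hqF hb hbF with hcase | ⟨w0, hw0, hPeq, hqnot⟩
  · -- path of b is {b}
    have hsingleton : ({b} : Finset α) ∈ F := by
      rw [← hcase]; exact path_mem_F hI hbF (mem_insert_self _ _)
    have hbB : b ∈ B := hsub (mem_insert_self _ _)
    have hAB : A ⊆ B := (Finset.subset_insert q A).trans hqB
    have hbA : insert b A ∈ F := by
      have hsf : Subfeasible F (A ∪ {b}) := ⟨B, hB, by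
        refine union_subset hAB ?_
        intro u hu; rw [Finset.mem_singleton] at hu; subst hu; exact hbB⟩
      have := hU A hA {b} hsingleton hsf
      have hequ : A ∪ {b} = insert b A := by
        ext u; simp only [mem_union, Finset.mem_singleton, mem_insert]; tauto
      rwa [hequ] at this
    have hm := hmin b hbnA hbA
    have hple : pathF F (insert b A) b ⊆ {b} := by
      refine path_min hI hbA (mem_insert_self _ _) hsingleton ?_ (mem_singleton_self b)
      intro u hu; rw [Finset.mem_singleton] at hu; subst hu; exact mem_insert_self _ _
    calc ∑ s ∈ pathF F B q, w s = ∑ s ∈ pathF F (insert q A) q, w s := by rw [h1]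
    _ ≤ ∑ s ∈ pathF F (insert b A) b, w s := hm
    _ ≤ ∑ s ∈ ({b} : Finset α), w s := Finset.sum_le_sum_of_subset hple
    _ = ∑ s ∈ pathF F B b, w s := by rw [h2, hcase]
  · rcases mem_insert.1 hw0 with hw0q | hw0A
    · -- predecessor is q itself
      have hsubset : pathF F (insert q A) q ⊆ pathF F B b := by
        rw [h2, hPeq, hw0q]; exact Finset.subset_insert _ _
      calc ∑ s ∈ pathF F B q, w s = ∑ s ∈ pathF F (insert q A) q, w s := by rw [h1]
      _ ≤ ∑ s ∈ pathF F B b, w s := Finset.sum_le_sum_of_subset hsubset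
    · -- predecessor is in A
      have hstw : pathF F (insert q A) w0 = pathF F A w0 :=
        path_stable hI hA hqF (Finset.subset_insert q A) hw0A
      have hPw_sub : pathF F A w0 ⊆ A := path_subset hI hA hw0A
      have hR : insert b (pathF F A w0) ∈ F := by
        rw [← hstw, ← hPeq]; exact path_mem_F hI hbF (mem_insert_self _ _)
      have hbB : b ∈ B := hsub (mem_insert_self _ _)
      have hAB : A ⊆ B := (Finset.subset_insert q A).trans hqB
      have hbA : insert b A ∈ F := by
        have hsf : Subfeasible F (A ∪ insert b (pathF F A w0)) := ⟨B, hB, by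
          refine union_subset hAB (insert_subset hbB (hPw_sub.trans hAB))⟩
        have := hU A hA _ hR hsf
        have hequ : A ∪ insert b (pathF F A w0) = insert b A := by
          ext u
          simp only [mem_union, mem_insert]
          constructor
          · rintro (h | rfl | h)
            · exact Or.inr h
            · exact Or.inl rfl
            · exact Or.inr (hPw_sub h)
          · rintro (rfl | h)
            · exact Or.inr (Or.inl rfl)
            · exact Or.inl h
        rwa [hequ] at this
      have hm := hmin b hbnA hbA
      have hple : pathF F (insert b A) b ⊆ insert b (pathF F A w0) :=
        path_min hI hbA (mem_insert_self _ _) hR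
          (insert_subset_insert _ hPw_sub) (mem_insert_self _ _)
      calc ∑ s ∈ pathF F B q, w s = ∑ s ∈ pathF F (insert q A) q, w s := by rw [h1]
      _ ≤ ∑ s ∈ pathF F (insert b A) b, w s := hm
      _ ≤ ∑ s ∈ insert b (pathF F A w0), w s := Finset.sum_le_sum_of_subset hple
      _ = ∑ s ∈ pathF F B b, w s := by rw [h2, hPeq, hstw]

lemma gext_chain (hG : IsGreedoid F) (hU : LocalUnion F) (hI : LocalInter F)
    (hLF : LocalForest F) {A : Finset α} {l : List α} (h : GExt F w A l) :
    A ∈ F → ∀ B : Finset α, B ∈ F → A ∪ l.toFinset ⊆ B →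
      l.Chain' (fun a b => (∑ s ∈ pathF F B a, w s) ≤ ∑ s ∈ pathF F B b, w s) := by
  induction h with
  | nil A h => intro _ B _ _; simp [List.Chain']
  | cons A q L hq hins hmin hL ih =>
    intro hA B hB hsub
    rw [union_toFinset_cons] at hsub
    have htail := ih hins B hB hsub
    rw [List.Chain', List.isChain_cons]
    refine ⟨?_, htail⟩
    intro b hbmem
    cases L with
    | nil => simp at hbmem
    | cons b' L' =>
      have hbb : b = b' := by
        simp only [List.head?_cons, Option.mem_some_iff] at hbmem
        exact hbmem.symm
      rw [hbb]
      cases hL with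
      | cons _ _ _ hb hbF hmin2 _ =>
        refine mono_step hG hU hI hLF hA hq hins hmin hb hbF hB ?_
        refine insert_subset ?_ ((Finset.subset_union_left).trans hsub)
        have hb'mem : b' ∈ insert q A ∪ (b' :: L').toFinset := by simp
        exact hsub hb'mem


lemma takeWhile_toFinset_of_pairwise {R : α → α → Prop} {p : α → Bool} :
    ∀ {L : List α}, L.Pairwise R → (∀ a b, R a b → p b = true → p a = true) →
      (L.takeWhile p).toFinset = L.toFinset.filter (fun a => p a = true) := by
  intro L
  induction L with
  | nil => intro _ _; simp
  | cons a L ih =>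
    intro hpw hdown
    rw [List.pairwise_cons] at hpw
    by_cases hpa : p a = true
    · rw [List.takeWhile_cons, if_pos hpa]
      simp only [List.toFinset_cons, Finset.filter_insert, hpa, if_pos]
      rw [ih hpw.2 hdown]
    · rw [List.takeWhile_cons, if_neg hpa]
      simp only [List.toFinset_nil]
      symm
      rw [Finset.filter_eq_empty_iff]
      intro u hu
      rw [List.mem_toFinset] at hu
      rcases List.mem_cons.1 hu with rfl | huL
      · exact hpa
      · intro hpu
        exact hpa (hdown a u (hpw.1 u huL) hpu)

set_option maxHeartbeats 1000000 in
/-- The master construction: an integral dual solution together with a primal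
feasible point of the same value. -/
lemma master (hG : IsGreedoid F) (hU : LocalUnion F) (hI : LocalInter F)
    (hLF : LocalForest F) (cn : α → ℕ) :
    ∃ (x : α → ℝ) (y : Finset α → ℝ),
      (∀ V : Finset α,
        (grank F univ : ℝ) - (grank F (univ \ V) : ℝ) ≤ ∑ s ∈ V, x s) ∧
      (∀ V, ∃ k : ℤ, y V = (k : ℝ)) ∧ (∀ V, 0 ≤ y V) ∧
      (∀ s : α, ∑ V ∈ univ.powerset.filter (fun V => s ∈ V), y V = (cn s : ℝ)) ∧
      (∑ V ∈ univ.powerset,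
          y V * ((grank F univ : ℝ) - (grank F (univ \ V) : ℝ)) =
        ∑ s : α, (cn s : ℝ) * x s) := by
  classical
  obtain ⟨L, hLx⟩ := gext_exists (F := F) cn (univ \ (∅ : Finset α)).card ∅ le_rfl
  set B := L.toFinset with hBdef
  have hBF : B ∈ F := by
    have := gext_union_mem hLx hG.1
    simpa using this
  have hBmax : ∀ x, x ∉ B → insert x B ∉ F := by
    intro x hx
    have hx' : x ∉ L := fun h => hx (List.mem_toFinset.2 h)
    have := gext_maximal hLx x (by simpa using hx')
    simpa using this
  have hrankuniv : grank F univ = B.card := by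
    apply le_antisymm
    · obtain ⟨X, hXF, hXsub, hXcard⟩ := grank_spec hG.1 univ
      rw [← hXcard]
      by_contra h
      push_neg at h
      obtain ⟨z, hz, hzB, hins⟩ := hG.2 B hBF X hXF h
      exact hBmax z hzB hins
    · exact le_grank hBF (subset_univ B)
  set dz : α → ℕ := fun z => ∑ s ∈ pathF F B z, cn s with hdzdef
  set T : ℕ := B.sup dz with hTdef
  have hdzT : ∀ z ∈ B, dz z ≤ T := fun z hz => Finset.le_sup hz
  -- the greedy prefixes
  set AA : ℕ → Finset α := fun t => (L.takeWhile (fun z => decide (dz z < t))).toFinset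
    with hAAdef
  have hchain : L.Chain' (fun a b => dz a ≤ dz b) := by
    have := gext_chain hG hU hI hLF hLx hG.1 B hBF (by simp [hBdef])
    exact this
  have hpw : L.Pairwise (fun a b => dz a ≤ dz b) := by
    haveI : IsTrans α (fun a b : α => dz a ≤ dz b) := ⟨fun _ _ _ => Nat.le_trans⟩
    exact List.isChain_iff_pairwise.1 hchain
  have hAAeq : ∀ t, AA t = B.filter (fun z => dz z < t) := by
    intro t
    simp only [hAAdef]
    have h1 := takeWhile_toFinset_of_pairwise (p := fun z => decide (dz z < t)) hpw
      (by intro a b hab hb; simp only [decide_eq_true_eq] at hb ⊢; omega)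
    rw [h1]
    apply Finset.filter_congr
    intro z _
    simp
  have hAAsubB : ∀ t, AA t ⊆ B := by
    intro t; rw [hAAeq]; exact filter_subset _ _
  have hAAF : ∀ t, AA t ∈ F := by
    intro t
    have hsplit : L.takeWhile (fun z => decide (dz z < t)) ++
        L.dropWhile (fun z => decide (dz z < t)) = L := List.takeWhile_append_dropWhile
    have := gext_prefix_mem (F := F) (w := cn)
      (l₁ := L.takeWhile (fun z => decide (dz z < t)))
      (l₂ := L.dropWhile (fun z => decide (dz z < t))) hG.1 (by rw [hsplit]; exact hLx)
    simpa [hAAdef] using this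
  have hmemAA : ∀ t z, z ∈ AA t ↔ z ∈ B ∧ dz z < t := by
    intro t z; rw [hAAeq]; simp
  -- stability of path values over prefixes
  have hstab : ∀ t z, z ∈ AA t → pathF F B z = pathF F (AA t) z := by
    intro t z hz
    exact path_stable hI (hAAF t) hBF (hAAsubB t) hz
  -- the next greedy pick at time t
  have hnext : ∀ t, 1 ≤ t → t ≤ T → ∃ qh, qh ∈ B ∧ t ≤ dz qh ∧
      dz qh = (∑ s ∈ pathF F (insert qh (AA t)) qh, cn s) ∧
      ∀ s', s' ∉ AA t → insert s' (AA t) ∈ F →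
        dz qh ≤ ∑ s ∈ pathF F (insert s' (AA t)) s', cn s := by
    intro t ht1 htT
    have hBne : B.Nonempty := by
      by_contra h
      rw [Finset.not_nonempty_iff_eq_empty] at h
      rw [hTdef, h] at htT
      simp at htT
      omega
    obtain ⟨z0, hz0B, hz0⟩ := Finset.exists_mem_eq_sup B hBne dz
    have hdwne : L.dropWhile (fun z => decide (dz z < t)) ≠ [] := by
      intro hdw
      have htw : L.takeWhile (fun z => decide (dz z < t)) = L := by
        have h2 := List.takeWhile_append_dropWhile (p := fun z => decide (dz z < t)) (l := L)
        rw [hdw, List.append_nil] at h2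
        exact h2
      have : AA t = B := by simp only [hAAdef]; rw [htw]
      have hz0AA : z0 ∈ AA t := by rw [this]; exact hz0B
      rw [hmemAA] at hz0AA
      omega
    set tw := L.takeWhile (fun z => decide (dz z < t)) with htwdef
    set dw := L.dropWhile (fun z => decide (dz z < t)) with hdwdef
    have hsplit : tw ++ dw = L := List.takeWhile_append_dropWhile
    cases hdw : dw with
    | nil => exact absurd hdw hdwne
    | cons qh rest =>
      have hGE : GExt F cn (∅ ∪ tw.toFinset) (qh :: rest) := by
        apply gext_append
        rw [← hdw, hsplit]
        exact hLx
      rw [Finset.empty_union] at hGE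
      have htwAA : tw.toFinset = AA t := rfl
      cases hGE with
      | cons _ _ _ hq hins hmin =>
        rw [htwAA] at hq hins hmin
        have hqhL : qh ∈ L := by
          rw [← hsplit, hdw]
          exact List.mem_append_right _ (List.mem_cons_self (a := qh) (l := rest))
        have hqhB : qh ∈ B := List.mem_toFinset.2 hqhL
        have hqhdz : t ≤ dz qh := by
          by_contra h
          exact hq ((hmemAA t qh).2 ⟨hqhB, by omega⟩)
        have hstabq : pathF F B qh = pathF F (insert qh (AA t)) qh := by
          apply path_stable hI hins hBF
          · exact insert_subset hqhB (hAAsubB t)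
          · exact mem_insert_self _ _
        refine ⟨qh, hqhB, hqhdz, by simp only [hdzdef]; rw [hstabq], ?_⟩
        intro s' hs' hinss'
        have := hmin s' hs' hinss'
        calc dz qh = ∑ s ∈ pathF F (insert qh (AA t)) qh, cn s := by simp only [hdzdef]; rw [hstabq]
        _ ≤ _ := this
  -- frontier label bound via path predecessors
  have hlab : ∀ t, 1 ≤ t → ∀ s', s' ∉ AA t → insert s' (AA t) ∈ F →
      (∑ s ∈ pathF F (insert s' (AA t)) s', cn s) ≤ (t - 1) + cn s' := by
    intro t ht s' hs' hins
    rcases path_pred hG hU hI hLF (hAAF t) hs' hins with hcase | ⟨w0, hw0, hPeq, hnot⟩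
    · rw [hcase, Finset.sum_singleton]
      omega
    · rw [hPeq, Finset.sum_insert hnot]
      have hw0dz : dz w0 < t := ((hmemAA t w0).1 hw0).2
      have : ∑ s ∈ pathF F (AA t) w0, cn s = dz w0 := by
        simp only [hdzdef]; rw [hstab t w0 hw0]
      omega
  -- label monotonicity in time
  have hlmono : ∀ t t', t ≤ t' → ∀ s', insert s' (AA t) ∈ F → insert s' (AA t') ∈ F →
      (∑ s ∈ pathF F (insert s' (AA t')) s', cn s) ≤
        ∑ s ∈ pathF F (insert s' (AA t)) s', cn s := by
    intro t t' htt' s' h1 h2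
    have hsub : AA t ⊆ AA t' := by
      rw [hAAeq, hAAeq]
      intro u hu
      rw [Finset.mem_filter] at hu ⊢
      exact ⟨hu.1, by omega⟩
    apply Finset.sum_le_sum_of_subset
    apply path_min hI h2 (mem_insert_self _ _) (path_mem_F hI h1 (mem_insert_self _ _))
    · exact (path_subset hI h1 (mem_insert_self _ _)).trans (insert_subset_insert _ hsub)
    · exact mem_path_self hI h1 (mem_insert_self _ _)
  -- interval data
  set hh : α → ℕ := fun s => if s ∈ B then dz s
    else ((Icc 1 T).filter (fun t => insert s (AA t) ∈ F)).sup id with hhhdef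
  set gg : α → ℕ := fun s => hh s - cn s with hggdef
  set UU : ℕ → Finset α := fun t => univ.filter (fun s => gg s < t ∧ t ≤ hh s) with hUUdef
  set padn : α → ℕ := fun s => if s ∈ B then 0 else cn s - (hh s - gg s) with hpadndef
  have hmemUU : ∀ t s, s ∈ UU t ↔ gg s < t ∧ t ≤ hh s := by
    intro t s; simp only [hUUdef]; simp
  have hcnledz : ∀ z ∈ B, cn z ≤ dz z := by
    intro z hz
    simp only [hdzdef]
    exact Finset.single_le_sum (f := cn) (fun i _ => Nat.zero_le _)
      (mem_path_self hI hBF hz)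
  have hhle : ∀ s, hh s ≤ T := by
    intro s
    simp only [hhhdef]
    by_cases hs : s ∈ B
    · rw [if_pos hs]; exact hdzT s hs
    · rw [if_neg hs]
      apply Finset.sup_le
      intro t ht
      exact (Finset.mem_Icc.1 (Finset.mem_filter.1 ht).1).2
  -- the key membership fact
  have hUmem : ∀ t, 1 ≤ t → t ≤ T → ∀ q, q ∉ AA t → insert q (AA t) ∈ F → q ∈ UU t := by
    intro t ht1 htT q hq hins
    by_cases hqB : q ∈ B
    · have hhq : hh q = dz q := by simp only [hhhdef]; exact if_pos hqB
      have htdz : t ≤ dz q := by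
        by_contra h
        exact hq ((hmemAA t q).2 ⟨hqB, by omega⟩)
      have hdzle : dz q ≤ ∑ s ∈ pathF F (insert q (AA t)) q, cn s := by
        simp only [hdzdef]
        apply Finset.sum_le_sum_of_subset
        apply path_min hI hBF hqB (path_mem_F hI hins (mem_insert_self _ _))
        · exact (path_subset hI hins (mem_insert_self _ _)).trans
            (insert_subset hqB (hAAsubB t))
        · exact mem_path_self hI hins (mem_insert_self _ _)
      have hlb := hlab t ht1 q hq hins
      rw [hmemUU]
      simp only [hggdef, hhq]
      omega
    · have hmemfil : t ∈ (Icc 1 T).filter (fun t => insert q (AA t) ∈ F) := by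
        rw [Finset.mem_filter, Finset.mem_Icc]
        exact ⟨⟨ht1, htT⟩, hins⟩
      have hne : ((Icc 1 T).filter (fun t => insert q (AA t) ∈ F)).Nonempty := ⟨t, hmemfil⟩
      have hhq : hh q = ((Icc 1 T).filter (fun t => insert q (AA t) ∈ F)).sup id := by
        simp only [hhhdef]; exact if_neg hqB
      have hthh : t ≤ hh q := by
        rw [hhq]
        exact Finset.le_sup (f := id) hmemfil
      obtain ⟨t', ht'mem, ht'⟩ := Finset.exists_mem_eq_sup _ hne (id : ℕ → ℕ)
      rw [Finset.mem_filter, Finset.mem_Icc] at ht'mem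
      have htt' : hh q = t' := by rw [hhq, ht']; rfl
      have hq' : q ∉ AA t' := fun h => hqB (hAAsubB t' h)
      obtain ⟨qh, hqhB, hqhdz, hqheq, hqhmin⟩ := hnext t' ht'mem.1.1 ht'mem.1.2
      have h1 : dz qh ≤ ∑ s ∈ pathF F (insert q (AA t')) q, cn s :=
        hqhmin q hq' ht'mem.2
      have h2 : (∑ s ∈ pathF F (insert q (AA t')) q, cn s) ≤
          ∑ s ∈ pathF F (insert q (AA t)) q, cn s := by
        apply hlmono t t' _ q hins ht'mem.2
        omega
      have h3 := hlab t ht1 q hq hins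
      rw [hmemUU]
      simp only [hggdef]
      omega
  -- rank of complements of the U's
  have hrankU : ∀ t, 1 ≤ t → t ≤ T → grank F (univ \ UU t) = (AA t).card := by
    intro t ht1 htT
    apply le_antisymm
    · obtain ⟨X, hXF, hXsub, hXcard⟩ := grank_spec hG.1 (univ \ UU t)
      rw [← hXcard]
      by_contra h
      push_neg at h
      obtain ⟨q, hqX, hqA, hins⟩ := hG.2 (AA t) (hAAF t) X hXF h
      have := hUmem t ht1 htT q hqA hins
      have := hXsub hqX
      rw [Finset.mem_sdiff] at this
      exact this.2 (hUmem t ht1 htT q hqA hins)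
    · apply le_grank (hAAF t)
      intro z hz
      rw [Finset.mem_sdiff]
      refine ⟨mem_univ z, ?_⟩
      rw [hmemUU]
      have hzB : z ∈ B := hAAsubB t hz
      have : dz z < t := ((hmemAA t z).1 hz).2
      have hhz : hh z = dz z := by simp only [hhhdef]; exact if_pos hzB
      omega
  have hbs : ∀ s, s ∉ B → grank F (univ \ {s}) = grank F univ := by
    intro s hs
    apply le_antisymm
    · exact grank_mono hG.1 (sdiff_subset)
    · rw [hrankuniv]
      apply le_grank hBF
      intro z hz
      rw [Finset.mem_sdiff, Finset.mem_singleton]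
      exact ⟨mem_univ z, fun h => hs (h ▸ hz)⟩
  -- counting
  have hcount : ∀ s, ((Icc 1 T).filter (fun t => s ∈ UU t)).card = hh s - gg s := by
    intro s
    have hT := hhle s
    have h1 : (Icc 1 T).filter (fun t => s ∈ UU t) = Icc (gg s + 1) (hh s) := by
      ext t
      simp only [Finset.mem_filter, Finset.mem_Icc, hmemUU]
      omega
    rw [h1, Nat.card_Icc]
    omega
  have hcoltotal : ∀ s, ((Icc 1 T).filter (fun t => s ∈ UU t)).card + padn s = cn s := by
    intro s
    rw [hcount]
    by_cases hs : s ∈ B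
    · have h1 : hh s = dz s := by simp only [hhhdef]; exact if_pos hs
      have h2 : padn s = 0 := by simp only [hpadndef]; exact if_pos hs
      have h3 := hcnledz s hs
      simp only [hggdef]
      omega
    · have h2 : padn s = cn s - (hh s - gg s) := by simp only [hpadndef]; exact if_neg hs
      simp only [hggdef] at h2 ⊢
      omega
  set bR : Finset α → ℝ := fun V => (grank F univ : ℝ) - (grank F (univ \ V) : ℝ)
    with hbRdef
  -- shadow vector formula
  have hsh : ∀ s, shVec F B s = ((B.filter (fun z => s ∈ pathF F B z)).card : ℝ) := by
    intro s
    rw [shVec]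
    have h1 : B.erase s = B \ {s} := Finset.erase_eq B s
    rw [h1, rank_sdiff hG hU hI hBF]
    have h2 : B.filter (fun z => Disjoint (pathF F B z) {s}) =
        B.filter (fun z => ¬ s ∈ pathF F B z) := by
      apply Finset.filter_congr
      intro z _
      simp [Finset.disjoint_singleton_right]
    rw [h2]
    have h3 : (B.filter (fun z => s ∈ pathF F B z)).card
        + (B.filter (fun z => ¬ s ∈ pathF F B z)).card = B.card :=
      Finset.card_filter_add_card_filter_not _
    have h4 : (B.filter (fun z => ¬ s ∈ pathF F B z)).card
        = B.card - (B.filter (fun z => s ∈ pathF F B z)).card := by omega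
    rw [h4]
    have h5 : (B.filter (fun z => s ∈ pathF F B z)).card ≤ B.card := by omega
    push_cast [Nat.cast_sub h5]
    ring
  -- primal feasibility of the shadow vector
  have hprimal : ∀ V : Finset α, bR V ≤ ∑ s ∈ V, shVec F B s := by
    intro V
    set Wit := (B.filter (fun z => Disjoint (pathF F B z) V)).biUnion
      (fun z => pathF F B z) with hWitdef
    have hWF : Wit ∈ F := biUnion_paths_mem hU hI hG.1 hBF _ (filter_subset _ _)
    have hWsub : Wit ⊆ univ \ V := by
      intro u hu
      obtain ⟨z, hz, hz2⟩ := Finset.mem_biUnion.1 hu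
      rw [Finset.mem_filter] at hz
      exact Finset.mem_sdiff.2 ⟨mem_univ u, Finset.disjoint_left.1 hz.2 hz2⟩
    have hfsub : B.filter (fun z => Disjoint (pathF F B z) V) ⊆ Wit := by
      intro z hz
      exact Finset.mem_biUnion.2 ⟨z, hz, mem_path_self hI hBF
        ((Finset.mem_filter.1 hz).1)⟩
    have hrge : (B.filter (fun z => Disjoint (pathF F B z) V)).card ≤
        grank F (univ \ V) :=
      le_trans (Finset.card_le_card hfsub) (le_grank hWF hWsub)
    have hsplit2 : (B.filter (fun z => Disjoint (pathF F B z) V)).card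
        + (B.filter (fun z => ¬ Disjoint (pathF F B z) V)).card = B.card :=
      Finset.card_filter_add_card_filter_not _
    have hbiun : B.filter (fun z => ¬ Disjoint (pathF F B z) V) =
        V.biUnion (fun s => B.filter (fun z => s ∈ pathF F B z)) := by
      ext z
      simp only [Finset.mem_filter, Finset.mem_biUnion, Finset.not_disjoint_iff]
      constructor
      · rintro ⟨hzB, a, ha1, ha2⟩; exact ⟨a, ha2, hzB, ha1⟩
      · rintro ⟨a, ha2, hzB, ha1⟩; exact ⟨hzB, a, ha1, ha2⟩
    have hble : (B.filter (fun z => ¬ Disjoint (pathF F B z) V)).card ≤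
        ∑ s ∈ V, (B.filter (fun z => s ∈ pathF F B z)).card := by
      rw [hbiun]; exact Finset.card_biUnion_le
    have hnat : B.card ≤ grank F (univ \ V)
        + ∑ s ∈ V, (B.filter (fun z => s ∈ pathF F B z)).card := by omega
    have hcast : ∑ s ∈ V, shVec F B s =
        ((∑ s ∈ V, (B.filter (fun z => s ∈ pathF F B z)).card : ℕ) : ℝ) := by
      push_cast
      exact Finset.sum_congr rfl (fun s _ => hsh s)
    simp only [hbRdef]
    rw [hrankuniv, hcast]
    have hr := (Nat.cast_le (α := ℝ)).2 hnat
    push_cast at hr ⊢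
    linarith
  -- the dual solution
  set yy : Finset α → ℝ := fun V => (((Icc 1 T).filter (fun t => UU t = V)).card : ℝ)
      + ∑ s ∈ univ.filter (fun s => V = {s}), (padn s : ℝ) with hyydef
  refine ⟨shVec F B, yy, hprimal, ?_, ?_, ?_, ?_⟩
  · intro V
    refine ⟨(((Icc 1 T).filter (fun t => UU t = V)).card : ℤ)
      + ∑ s ∈ univ.filter (fun s => V = {s}), (padn s : ℤ), ?_⟩
    simp only [hyydef]
    push_cast
    ring
  · intro V
    simp only [hyydef]
    have h1 : (0:ℝ) ≤ (((Icc 1 T).filter (fun t => UU t = V)).card : ℝ) := Nat.cast_nonneg _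
    have h2 : (0:ℝ) ≤ ∑ s ∈ univ.filter (fun s => V = {s}), (padn s : ℝ) :=
      Finset.sum_nonneg fun s _ => Nat.cast_nonneg _
    linarith
  · intro s0
    have hc1 : ∑ V ∈ univ.powerset.filter (fun V => s0 ∈ V),
        (((Icc 1 T).filter (fun t => UU t = V)).card : ℝ)
        = (((Icc 1 T).filter (fun t => s0 ∈ UU t)).card : ℝ) := by
      rw [← Nat.cast_sum]
      congr 1
      have hmaps : ∀ t' ∈ (Icc 1 T).filter (fun t => s0 ∈ UU t),
          UU t' ∈ univ.powerset.filter (fun V => s0 ∈ V) := by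
        intro t' ht'
        rw [Finset.mem_filter] at ht' ⊢
        exact ⟨Finset.mem_powerset.2 (subset_univ _), ht'.2⟩
      rw [Finset.card_eq_sum_card_fiberwise hmaps]
      apply Finset.sum_congr rfl
      intro V hV
      congr 1
      ext t'
      rw [Finset.mem_filter] at hV
      simp only [Finset.mem_filter]
      constructor
      · rintro ⟨h1a, h3⟩
        exact ⟨⟨h1a, by rw [h3]; exact hV.2⟩, h3⟩
      · rintro ⟨⟨h1a, h2a⟩, h3⟩
        exact ⟨h1a, h3⟩
    have hc2 : ∑ V ∈ univ.powerset.filter (fun V => s0 ∈ V),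
        (∑ s ∈ univ.filter (fun s => V = {s}), (padn s : ℝ)) = (padn s0 : ℝ) := by
      have step1 : ∀ V ∈ univ.powerset.filter (fun V => s0 ∈ V),
          (∑ s ∈ univ.filter (fun s => V = {s}), (padn s : ℝ))
          = ∑ s ∈ univ, if V = {s} then (padn s : ℝ) else 0 := by
        intro V _
        rw [Finset.sum_filter]
      rw [Finset.sum_congr rfl step1, Finset.sum_comm]
      have step2 : ∀ s ∈ (univ : Finset α),
          (∑ V ∈ univ.powerset.filter (fun V => s0 ∈ V),
            if V = {s} then (padn s : ℝ) else 0)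
          = if s = s0 then (padn s : ℝ) else 0 := by
        intro s _
        rw [Finset.sum_ite_eq' (univ.powerset.filter (fun V => s0 ∈ V)) ({s} : Finset α)
          (fun _ => (padn s : ℝ))]
        by_cases h : s = s0
        · subst h
          rw [if_pos, if_pos rfl]
          rw [Finset.mem_filter]
          exact ⟨Finset.mem_powerset.2 (subset_univ _), mem_singleton_self s⟩
        · rw [if_neg, if_neg h]
          rw [Finset.mem_filter]
          rintro ⟨-, hmem⟩
          exact h ((Finset.mem_singleton.1 hmem).symm)
      rw [Finset.sum_congr rfl step2]
      simp
    simp only [hyydef]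
    rw [Finset.sum_add_distrib, hc1, hc2]
    have hct := hcoltotal s0
    have : ((((Icc 1 T).filter (fun t => s0 ∈ UU t)).card : ℕ) : ℝ) + ((padn s0 : ℕ) : ℝ)
        = ((cn s0 : ℕ) : ℝ) := by
      rw [← Nat.cast_add, hct]
    exact this
  · have hobj1 : ∑ V ∈ univ.powerset,
        (((Icc 1 T).filter (fun t => UU t = V)).card : ℝ) * bR V
        = ∑ t ∈ Icc 1 T, bR (UU t) := by
      have hmaps : ∀ t' ∈ Icc 1 T, UU t' ∈ univ.powerset :=
        fun t' _ => Finset.mem_powerset.2 (subset_univ _)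
      rw [← Finset.sum_fiberwise_of_maps_to hmaps (fun t' => bR (UU t'))]
      apply Finset.sum_congr rfl
      intro V hV
      rw [Finset.sum_congr rfl (fun t' ht' => by rw [(Finset.mem_filter.1 ht').2])]
      rw [Finset.sum_const, nsmul_eq_mul]
    have hobj2 : ∑ V ∈ univ.powerset,
        (∑ s ∈ univ.filter (fun s => V = {s}), (padn s : ℝ)) * bR V = 0 := by
      have step1 : ∀ V ∈ univ.powerset,
          (∑ s ∈ univ.filter (fun s => V = {s}), (padn s : ℝ)) * bR V
          = ∑ s ∈ univ, if V = {s} then (padn s : ℝ) * bR V else 0 := by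
        intro V _
        rw [Finset.sum_filter, Finset.sum_mul]
        apply Finset.sum_congr rfl
        intro s _
        split_ifs
        · rfl
        · ring
      rw [Finset.sum_congr rfl step1, Finset.sum_comm]
      apply Finset.sum_eq_zero
      intro s _
      rw [Finset.sum_ite_eq' (univ.powerset) ({s} : Finset α)
        (fun V => (padn s : ℝ) * bR V)]
      rw [if_pos (Finset.mem_powerset.2 (subset_univ _))]
      by_cases hs : s ∈ B
      · have h0 : padn s = 0 := by simp only [hpadndef]; exact if_pos hs
        rw [h0]
        simp
      · have h0 : bR {s} = 0 := by
          simp only [hbRdef]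
          rw [hbs s hs]
          ring
        rw [h0]
        ring
    have hmid : ∑ t ∈ Icc 1 T, bR (UU t) = ((∑ z ∈ B, dz z : ℕ) : ℝ) := by
      have hterm : ∀ t ∈ Icc 1 T, bR (UU t) = ((B.card - (AA t).card : ℕ) : ℝ) := by
        intro t ht
        rw [Finset.mem_Icc] at ht
        simp only [hbRdef]
        rw [hrankuniv, hrankU t ht.1 ht.2]
        have hle := Finset.card_le_card (hAAsubB t)
        push_cast [Nat.cast_sub hle]
        ring
      rw [Finset.sum_congr rfl hterm, ← Nat.cast_sum]
      congr 1
      have hterm2 : ∀ t ∈ Icc 1 T, B.card - (AA t).card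
          = (B.filter (fun z => t ≤ dz z)).card := by
        intro t _
        rw [hAAeq]
        have hsp : (B.filter (fun z => dz z < t)).card
            + (B.filter (fun z => ¬ dz z < t)).card = B.card :=
          Finset.card_filter_add_card_filter_not _
        have hco : B.filter (fun z => ¬ dz z < t) = B.filter (fun z => t ≤ dz z) := by
          apply Finset.filter_congr
          intro z _
          constructor
          · intro h2; omega
          · intro h2; omega
        rw [← hco]
        omega
      rw [Finset.sum_congr rfl hterm2]
      have hterm3 : ∀ t ∈ Icc 1 T, (B.filter (fun z => t ≤ dz z)).card
          = ∑ z ∈ B, if t ≤ dz z then 1 else 0 := by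
        intro t _
        rw [Finset.card_filter]
      rw [Finset.sum_congr rfl hterm3, Finset.sum_comm]
      apply Finset.sum_congr rfl
      intro z hz
      have hfil : (Icc 1 T).filter (fun t => t ≤ dz z) = Icc 1 (dz z) := by
        have := hdzT z hz
        ext t
        simp only [Finset.mem_filter, Finset.mem_Icc]
        omega
      calc ∑ t ∈ Icc 1 T, (if t ≤ dz z then 1 else 0)
          = ((Icc 1 T).filter (fun t => t ≤ dz z)).card := (Finset.card_filter _ _).symm
      _ = (Icc 1 (dz z)).card := by rw [hfil]
      _ = dz z := by rw [Nat.card_Icc]; omega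
    have hxval : ∑ s : α, (cn s : ℝ) * shVec F B s = ((∑ z ∈ B, dz z : ℕ) : ℝ) := by
      have h1 : ∀ s ∈ (univ : Finset α), (cn s : ℝ) * shVec F B s
          = ((cn s * (B.filter (fun z => s ∈ pathF F B z)).card : ℕ) : ℝ) := by
        intro s _
        rw [hsh s]
        push_cast
        ring
      rw [Finset.sum_congr rfl h1, ← Nat.cast_sum]
      congr 1
      have h2 : ∀ s ∈ (univ : Finset α),
          cn s * (B.filter (fun z => s ∈ pathF F B z)).card
          = ∑ z ∈ B, if s ∈ pathF F B z then cn s else 0 := by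
        intro s _
        rw [Finset.card_filter, Finset.mul_sum]
        apply Finset.sum_congr rfl
        intro z _
        split_ifs <;> simp
      rw [Finset.sum_congr rfl h2, Finset.sum_comm]
      apply Finset.sum_congr rfl
      intro z hz
      have h3 : ∑ s ∈ univ, (if s ∈ pathF F B z then cn s else 0)
          = ∑ s ∈ pathF F B z, cn s := by
        rw [Finset.sum_ite_mem univ (pathF F B z) cn, Finset.univ_inter]
      rw [h3]
    calc ∑ V ∈ univ.powerset, yy V * bR V
        = ∑ V ∈ univ.powerset,
          ((((Icc 1 T).filter (fun t => UU t = V)).card : ℝ) * bR V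
            + (∑ s ∈ univ.filter (fun s => V = {s}), (padn s : ℝ)) * bR V) := by
          apply Finset.sum_congr rfl
          intro V _
          simp only [hyydef, add_mul]
    _ = ∑ t ∈ Icc 1 T, bR (UU t) + 0 := by rw [Finset.sum_add_distrib, hobj1, hobj2]
    _ = ∑ s : α, (cn s : ℝ) * shVec F B s := by rw [hmid, hxval]; ring

end Aux2

lemma swap_sum {F : Set (Finset α)} (y : Finset α → ℝ) (x : α → ℝ) :
    ∑ V ∈ univ.powerset, y V * ∑ s ∈ V, x s
    = ∑ s : α, (∑ V ∈ univ.powerset.filter (fun V => s ∈ V), y V) * x s := by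
  classical
  have h1 : ∀ V ∈ univ.powerset, y V * ∑ s ∈ V, x s
      = ∑ s ∈ univ, if s ∈ V then y V * x s else 0 := by
    intro V _
    rw [Finset.mul_sum, Finset.sum_ite_mem, Finset.univ_inter]
  rw [Finset.sum_congr rfl h1, Finset.sum_comm]
  apply Finset.sum_congr rfl
  intro s _
  rw [Finset.sum_mul, Finset.sum_filter]


/-- Total dual integrality of the system `x(U) ≥ r(S) - r(S \ U)` for local
forest greedoids: for every integer `c` with finite (bounded-below) primal
minimum, the dual has an integer optimal solution. -/
theorem statement12 (F : Set (Finset α)) (hG : IsGreedoid F)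
    (hU : LocalUnion F) (hI : LocalInter F) (hLF : LocalForest F)
    (c : α → ℤ)
    (hfin : ∃ m : ℝ, ∀ x : α → ℝ,
      (∀ U : Finset α,
        (grank F Finset.univ : ℝ) - (grank F (Finset.univ \ U) : ℝ) ≤ ∑ s ∈ U, x s) →
      m ≤ ∑ s : α, (c s : ℝ) * x s) :
    ∃ y : Finset α → ℝ, (∀ U, ∃ k : ℤ, y U = k) ∧
      (∀ U, 0 ≤ y U) ∧
      (∀ s : α, ∑ U ∈ Finset.univ.powerset.filter (fun U => s ∈ U), y U = (c s : ℝ)) ∧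
      (∀ y' : Finset α → ℝ, (∀ U, 0 ≤ y' U) →
        (∀ s : α, ∑ U ∈ Finset.univ.powerset.filter (fun U => s ∈ U), y' U = (c s : ℝ)) →
        ∑ U ∈ Finset.univ.powerset,
            y' U * ((grank F Finset.univ : ℝ) - (grank F (Finset.univ \ U) : ℝ)) ≤
          ∑ U ∈ Finset.univ.powerset,
            y U * ((grank F Finset.univ : ℝ) - (grank F (Finset.univ \ U) : ℝ))) := by
  classical
  -- the weights are nonnegative
  have hc : ∀ s, 0 ≤ c s := by
    by_contra h
    push_neg at h
    obtain ⟨s0, hs0⟩ := h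
    obtain ⟨m, hm⟩ := hfin
    set r0 : ℝ := (grank F univ : ℝ) with hr0def
    have hr0 : 0 ≤ r0 := Nat.cast_nonneg _
    set K : ℝ := ∑ s : α, (c s : ℝ) * r0 with hKdef
    set tt : ℝ := max 0 ((m - 1 - K) / (c s0 : ℝ)) with httdef
    have htt : 0 ≤ tt := le_max_left _ _
    set x : α → ℝ := fun s => r0 + (if s = s0 then tt else 0) with hxdef
    have hxge : ∀ s, r0 ≤ x s := by
      intro s
      simp only [hxdef]
      split_ifs <;> linarith
    have hxnn : ∀ s, 0 ≤ x s := fun s => le_trans hr0 (hxge s)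
    have hxfeas : ∀ U : Finset α,
        (grank F univ : ℝ) - (grank F (univ \ U) : ℝ) ≤ ∑ s ∈ U, x s := by
      intro U
      rcases U.eq_empty_or_nonempty with rfl | hUne
      · simp
      · obtain ⟨u0, hu0⟩ := hUne
        have h2 : x u0 ≤ ∑ s ∈ U, x s :=
          Finset.single_le_sum (fun s _ => hxnn s) hu0
        have h3 : (0:ℝ) ≤ (grank F (univ \ U) : ℝ) := Nat.cast_nonneg _
        have h4 := hxge u0
        simp only [hr0def] at h4
        linarith
    have hval := hm x hxfeas
    have hxval : ∑ s : α, (c s : ℝ) * x s = K + (c s0 : ℝ) * tt := by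
      calc ∑ s : α, (c s : ℝ) * x s
          = ∑ s : α, ((c s : ℝ) * r0 + (if s = s0 then (c s : ℝ) * tt else 0)) := by
            apply Finset.sum_congr rfl
            intro s _
            simp only [hxdef]
            split_ifs <;> ring
      _ = K + ∑ s : α, (if s = s0 then (c s : ℝ) * tt else 0) := by
            rw [Finset.sum_add_distrib]
      _ = K + (c s0 : ℝ) * tt := by
            rw [Finset.sum_ite_eq' univ s0 (fun s => (c s : ℝ) * tt)]
            simp
    have hcs0 : (c s0 : ℝ) < 0 := by exact_mod_cast hs0
    rcases le_or_gt ((m - 1 - K) / (c s0 : ℝ)) 0 with hle | hlt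
    · have htt0 : tt = 0 := max_eq_left hle
      have hne : (c s0 : ℝ) ≠ 0 := ne_of_lt hcs0
      have heq : ((m - 1 - K) / (c s0 : ℝ)) * (c s0 : ℝ) = m - 1 - K :=
        div_mul_cancel₀ _ hne
      have hprod : 0 ≤ ((m - 1 - K) / (c s0 : ℝ)) * (c s0 : ℝ) := by
        have hmn := mul_nonneg (neg_nonneg.2 hle) (neg_nonneg.2 hcs0.le)
        rw [neg_mul_neg] at hmn
        exact hmn
      have hKm : 0 ≤ m - 1 - K := heq ▸ hprod
      rw [hxval, htt0] at hval
      linarith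
    · have htteq : tt = (m - 1 - K) / (c s0 : ℝ) := max_eq_right (le_of_lt hlt)
      have hne : (c s0 : ℝ) ≠ 0 := ne_of_lt hcs0
      have heq2 : (c s0 : ℝ) * tt = m - 1 - K := by
        rw [htteq, mul_comm]
        exact div_mul_cancel₀ _ hne
      rw [hxval, heq2] at hval
      linarith
  set cn : α → ℕ := fun s => (c s).toNat with hcndef
  have hcn : ∀ s, (cn s : ℝ) = (c s : ℝ) := by
    intro s
    simp only [hcndef]
    exact_mod_cast Int.toNat_of_nonneg (hc s)
  obtain ⟨x, y, hxfeas, hyint, hynn, hycol, hyobj⟩ := master hG hU hI hLF cn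
  refine ⟨y, hyint, hynn, ?_, ?_⟩
  · intro s
    rw [hycol s, hcn s]
  · intro y' hy'nn hy'col
    have hle : ∀ V ∈ univ.powerset,
        y' V * ((grank F univ : ℝ) - (grank F (univ \ V) : ℝ)) ≤
          y' V * ∑ s ∈ V, x s :=
      fun V _ => mul_le_mul_of_nonneg_left (hxfeas V) (hy'nn V)
    calc ∑ V ∈ univ.powerset,
        y' V * ((grank F univ : ℝ) - (grank F (univ \ V) : ℝ))
        ≤ ∑ V ∈ univ.powerset, y' V * ∑ s ∈ V, x s := Finset.sum_le_sum hle
    _ = ∑ s : α, (∑ V ∈ univ.powerset.filter (fun V => s ∈ V), y' V) * x s :=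
        swap_sum (F := F) y' x
    _ = ∑ s : α, (cn s : ℝ) * x s := by
        apply Finset.sum_congr rfl
        intro s _
        rw [hy'col s, hcn s]
    _ = ∑ V ∈ univ.powerset,
        y V * ((grank F univ : ℝ) - (grank F (univ \ V) : ℝ)) := hyobj.symm
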